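/- Let q ≥ 2, j ≥ 2, 1 < s < q, s̄ = q - s. With b_{j,m,n} as above and c_{j,m,n} := b_{j,m,n} - [s̄^{j+m-n}]_q for 1 ≤ n ≤ q^{j-1}+1 and m ≥ n, one has 0 < c_{j,m,n} ≤ q^{j+m-n} - 1 and c_{j,m+1,n} = c_{j,m,n} + s · q^{j+m-n}. -/

import Mathlib

/-- `[1^m 0^j]_q = ∑_{i<m} q^{j+i}`. -/
def onesZeros (q j m : ℕ) : ℕ := ∑ i ∈ Finset.range m, q ^ (j + i)

/-- `bSeq q j m t` is `b_{j,m,t+1}`, defined by `b_{j,m,1} = [1^m 0^j]_q`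
and `b_{j,m,n+1} = b_{j,m,n} - (q^{j+m-n} - 1)`. -/
def bSeq (q j m : ℕ) : ℕ → ℕ
  | 0 => onesZeros q j m
  | t + 1 => bSeq q j m t - (q ^ (j + m - t - 1) - 1)

/-- `c_{j,m,n} = b_{j,m,n} - [s̄^{j+m-n}]_q` with `s̄ = q - s`. -/
def cSeq (q j s m n : ℕ) : ℕ :=
  bSeq q j m (n - 1) - (q - s) * (q ^ (j + m - n) - 1) / (q - 1)

lemma geom_eq (q : ℕ) (hq : 1 ≤ q) (k : ℕ) :
    (q - 1) * ∑ i ∈ Finset.range k, q ^ i + 1 = q ^ k := by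
  obtain ⟨p, rfl⟩ : ∃ p, q = p + 1 := ⟨q - 1, by omega⟩
  simp only [Nat.add_sub_cancel]
  induction k with
  | zero => simp
  | succ k ih =>
    rw [Finset.sum_range_succ, mul_add, pow_succ, ← ih]
    ring

lemma geom_pos (q k : ℕ) (hq : 1 ≤ q) (hk : 1 ≤ k) :
    0 < ∑ i ∈ Finset.range k, q ^ i :=
  Finset.sum_pos (fun i _ => Nat.pow_pos (n := i) (by omega))
    (Finset.nonempty_range_iff.mpr (by omega))

lemma bSeq_eq (q j m : ℕ) (hq : 1 ≤ q) :
    ∀ t, t ≤ m → bSeq q j m t = onesZeros q j (m - t) + t := by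
  intro t
  induction t with
  | zero => intro _; simp [bSeq]
  | succ t ih =>
    intro h
    rw [bSeq, ih (by omega)]
    have h1 : m - t = (m - (t + 1)) + 1 := by omega
    have h2 : j + m - t - 1 = j + (m - (t + 1)) := by omega
    rw [h1, h2, onesZeros, Finset.sum_range_succ, ← onesZeros]
    have h3 : 1 ≤ q ^ (j + (m - (t + 1))) := Nat.one_le_pow _ _ (by omega)
    omega

lemma div_eq (q s k : ℕ) (hq : 2 ≤ q) :
    (q - s) * (q ^ k - 1) / (q - 1) = (q - s) * ∑ i ∈ Finset.range k, q ^ i := by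
  have h := geom_eq q (by omega) k
  have h1 : q ^ k - 1 = (q - 1) * ∑ i ∈ Finset.range k, q ^ i := by omega
  rw [h1, ← mul_assoc, mul_comm (q - s) (q - 1), mul_assoc,
    Nat.mul_div_cancel_left _ (by omega : 0 < q - 1)]

lemma oz_add (q j : ℕ) : ∀ r, onesZeros q j r + ∑ i ∈ Finset.range j, q ^ i
    = ∑ i ∈ Finset.range (j + r), q ^ i := by
  intro r
  induction r with
  | zero => simp [onesZeros]
  | succ r ih =>
    rw [onesZeros, Finset.sum_range_succ, ← onesZeros]
    have : j + (r + 1) = (j + r) + 1 := by omega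
    rw [this, Finset.sum_range_succ, pow_add]
    omega

/-- for `q ≥ 2`, `j ≥ 2`, `1 < s < q`, `1 ≤ n ≤ q^{j-1}+1`, `m ≥ n`:
`0 < c_{j,m,n} ≤ q^{j+m-n} - 1` and `c_{j,m+1,n} = c_{j,m,n} + s·q^{j+m-n}`. -/
theorem stmt10 (q j s : ℕ) (hq : 2 ≤ q) (hj : 2 ≤ j) (hs1 : 1 < s) (hsq : s < q)
    (n m : ℕ) (hn1 : 1 ≤ n) (hn2 : n ≤ q ^ (j - 1) + 1) (hm : n ≤ m) :
    0 < cSeq q j s m n ∧ cSeq q j s m n ≤ q ^ (j + m - n) - 1 ∧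
      cSeq q j s (m + 1) n = cSeq q j s m n + s * q ^ (j + m - n) := by
  obtain ⟨d, rfl⟩ : ∃ d, m = n + d := ⟨m - n, by omega⟩
  have hk : j + (n + d) - n = j + d := by omega
  have hk' : j + (n + d + 1) - n = j + d + 1 := by omega
  set A := ∑ i ∈ Finset.range j, q ^ i with hA
  set B := ∑ i ∈ Finset.range (j + d), q ^ i with hB
  set O := onesZeros q j (d + 1) with hO
  set P := q ^ (j + d) with hP
  -- closed forms for bSeq
  have harg : n + d - (n - 1) = d + 1 := by omega
  have harg' : n + d + 1 - (n - 1) = d + 2 := by omega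
  have hb : bSeq q j (n + d) (n - 1) = O + (n - 1) := by
    rw [bSeq_eq q j (n + d) (by omega) (n - 1) (by omega), harg]
  have hb' : bSeq q j (n + d + 1) (n - 1) = onesZeros q j (d + 2) + (n - 1) := by
    rw [bSeq_eq q j (n + d + 1) (by omega) (n - 1) (by omega), harg']
  -- basic facts
  have hgB : (q - 1) * B + 1 = P := geom_eq q (by omega) (j + d)
  have hB1 : 0 < B := geom_pos q (j + d) (by omega) (by omega)
  have hPO : P ≤ O := by
    rw [hO, onesZeros, Finset.sum_range_succ, ← onesZeros]
    omega
  have hOA : O + A = B + P := by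
    have h := oz_add q j (d + 1)
    have : j + (d + 1) = (j + d) + 1 := by omega
    rw [this, Finset.sum_range_succ] at h
    rw [hO, hA, hB, hP]
    omega
  have hnA : n ≤ A := by
    have h1 := Finset.sum_range_succ (fun i => q ^ i) (j - 1)
    rw [show j - 1 + 1 = j from by omega] at h1
    rw [hA, h1]
    have h2 : 0 < ∑ i ∈ Finset.range (j - 1), q ^ i :=
      geom_pos q (j - 1) (by omega) (by omega)
    have h3 : q ^ (j - 1) + 1 ≥ n := hn2
    omega
  -- abstract the nonlinear products
  obtain ⟨E, hE, hE1, hE2⟩ : ∃ E, E = (q - s) * B ∧ B ≤ E ∧ E + B + 1 ≤ P := by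
    refine ⟨(q - s) * B, rfl, ?_, ?_⟩
    · calc B = 1 * B := (one_mul B).symm
        _ ≤ (q - s) * B := Nat.mul_le_mul_right B (by omega)
    · have h1 : (q - s) * B ≤ (q - 2) * B := Nat.mul_le_mul_right B (by omega)
      have h2 : (q - 2) * B + B = (q - 1) * B := by
        have : q - 1 = (q - 2) + 1 := by omega
        rw [this, add_mul, one_mul]
      omega
  obtain ⟨F, hF⟩ : ∃ F, F = (q - s) * P := ⟨_, rfl⟩
  obtain ⟨G, hG⟩ : ∃ G, G = s * P := ⟨_, rfl⟩
  have hFG : F + G = q * P := by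
    rw [hF, hG, ← add_mul]
    congr 1
    omega
  -- closed forms for cSeq
  have hcm : cSeq q j s (n + d) n = O + (n - 1) - E := by
    rw [cSeq, hb, hk, div_eq q s (j + d) hq, ← hB, ← hE]
  have hcm1 : cSeq q j s (n + d + 1) n = O + q ^ (j + d + 1) + (n - 1) - (E + F) := by
    rw [cSeq, hb', hk', div_eq q s (j + d + 1) hq, Finset.sum_range_succ, ← hB, ← hP]
    have h1 : onesZeros q j (d + 2) = O + q ^ (j + d + 1) := by
      rw [hO, onesZeros, onesZeros, Finset.sum_range_succ]
      have : j + (d + 1) = j + d + 1 := by omega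
      rw [this]
    rw [h1, mul_add, ← hE, ← hF]
  have hpow : q ^ (j + d + 1) = q * P := by
    rw [hP, pow_succ, mul_comm]
  rw [hcm, hcm1, hk, ← hP, ← hG]
  refine ⟨by omega, ?_, by omega⟩
  omega
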